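/- (Noise alignment) Let F be a field, L, N, L_Z positive integers, and let two nodes v, u carry matrices F_v, F_u ∈ F^{N×L} and H_v, H_u ∈ F^{N×L_Z} with H_v, H_u of full row rank N. If the correctness condition holds for the pair {v,u}, then dim(rowspan(H_v) ∩ rowspan(H_u)) ≥ L. -/

import Mathlib

open Matrix

/-- The row space of a matrix: the span of its rows in `Fin LZ → F`. -/
noncomputable def rowSpan {F : Type} [Field F] {N LZ : ℕ}
    (H : Matrix (Fin N) (Fin LZ) F) : Submodule F (Fin LZ → F) :=
  Submodule.span F (Set.range H)

/-- Linear correctness condition for a (qualified) pair of nodes. -/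
def CorrectPair (F : Type) [Field F] (L N LZ : ℕ)
    (Fv Fu : Matrix (Fin N) (Fin L) F) (Hv Hu : Matrix (Fin N) (Fin LZ) F) : Prop :=
  ∀ (k : ℕ) (Pv Pu : Matrix (Fin k) (Fin N) F),
    Pv * Hv = Pu * Hu →
    Pv.rank = Module.finrank F ↥(rowSpan Hv ⊓ rowSpan Hu) →
    Pu.rank = Module.finrank F ↥(rowSpan Hv ⊓ rowSpan Hu) →
    (Pv * Fv - Pu * Fu).rank = L

/-- Linear security condition for an (unqualified) pair of nodes. -/
def SecurePair (F : Type) [Field F] (L N LZ : ℕ)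
    (Fv Fu : Matrix (Fin N) (Fin L) F) (Hv Hu : Matrix (Fin N) (Fin LZ) F) : Prop :=
  ∀ (k : ℕ) (Pv Pu : Matrix (Fin k) (Fin N) F),
    Pv * Hv = Pu * Hu → Pv * Fv = Pu * Fu

/-- **Noise alignment (Lemma 1, first part).** If the correctness condition holds
for the pair `{v, u}`, then the overlap of the two noise row spaces has dimension
at least `L`. -/
theorem noise_alignment (F : Type) [Field F] (L N LZ : ℕ)
    (hL : 0 < L) (hN : 0 < N) (hLZ : 0 < LZ)
    (Fv Fu : Matrix (Fin N) (Fin L) F) (Hv Hu : Matrix (Fin N) (Fin LZ) F)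
    (hHv : Hv.rank = N) (hHu : Hu.rank = N)
    (hc : CorrectPair F L N LZ Fv Fu Hv Hu) :
    L ≤ Module.finrank F ↥(rowSpan Hv ⊓ rowSpan Hu) := by
  classical
  set S := rowSpan Hv ⊓ rowSpan Hu with hS
  set d := Module.finrank F S with hd
  -- basis of S
  have : FiniteDimensional F S := inferInstance
  let b : Module.Basis (Fin d) F S := Module.finBasis F S
  -- coefficients
  have hv : ∀ i : Fin d, ∃ c : Fin N → F, (∑ j, c j • Hv j) = (b i : Fin LZ → F) := by
    intro i
    have : (b i : Fin LZ → F) ∈ Submodule.span F (Set.range Hv) := (b i).2.1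
    exact (Submodule.mem_span_range_iff_exists_fun F).mp this
  have hu : ∀ i : Fin d, ∃ c : Fin N → F, (∑ j, c j • Hu j) = (b i : Fin LZ → F) := by
    intro i
    have : (b i : Fin LZ → F) ∈ Submodule.span F (Set.range Hu) := (b i).2.2
    exact (Submodule.mem_span_range_iff_exists_fun F).mp this
  let Pv : Matrix (Fin d) (Fin N) F := Matrix.of fun i => Classical.choose (hv i)
  let Pu : Matrix (Fin d) (Fin N) F := Matrix.of fun i => Classical.choose (hu i)
  let W : Matrix (Fin d) (Fin LZ) F := Matrix.of fun i => (b i : Fin LZ → F)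
  have hPvW : Pv * Hv = W := by
    ext i l
    have := congrFun (Classical.choose_spec (hv i)) l
    simpa [Matrix.mul_apply, Finset.sum_apply, Pv, W] using this
  have hPuW : Pu * Hu = W := by
    ext i l
    have := congrFun (Classical.choose_spec (hu i)) l
    simpa [Matrix.mul_apply, Finset.sum_apply, Pu, W] using this
  -- rank of W is d
  have hWrank : W.rank = d := by
    rw [Matrix.rank_eq_finrank_span_row]
    have hli : LinearIndependent F (fun i : Fin d => (b i : Fin LZ → F)) :=
      b.linearIndependent.map' S.subtype S.ker_subtype
    have := finrank_span_eq_card hli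
    rw [Fintype.card_fin] at this
    exact this
  have hPvrank : Pv.rank = d := by
    refine le_antisymm ?_ ?_
    · simpa using Pv.rank_le_card_height
    · calc d = W.rank := hWrank.symm
        _ = (Pv * Hv).rank := by rw [hPvW]
        _ ≤ Pv.rank := Matrix.rank_mul_le_left Pv Hv
  have hPurank : Pu.rank = d := by
    refine le_antisymm ?_ ?_
    · simpa using Pu.rank_le_card_height
    · calc d = W.rank := hWrank.symm
        _ = (Pu * Hu).rank := by rw [hPuW]
        _ ≤ Pu.rank := Matrix.rank_mul_le_left Pu Hu
  have key := hc d Pv Pu (hPvW.trans hPuW.symm) hPvrank hPurank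
  calc L = (Pv * Fv - Pu * Fu).rank := key.symm
    _ ≤ d := by simpa using (Pv * Fv - Pu * Fu).rank_le_card_height
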